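/- For (x,y) ∈ ∂²F let L(x,y) ∈ ℕ denote the length of the maximal common initial segment of x and y. Then the uniform current η_A has density 2k(2k−1)^(2L(x,y)−1) with respect to the product measure μ_A × μ_A: for every Borel set W ⊆ ∂²F, η_A(W) = ∫_W 2k(2k−1)^(2L(x,y)−1) d(μ_A × μ_A)(x,y). -/

import Mathlib

open MeasureTheory Filter Topology
open scoped ENNReal NNReal

namespace FGC

noncomputable section

variable (k : ℕ)

/-- The alphabet `A = Σ ∪ Σ⁻¹`: a letter is a basis element together with a sign. -/
abbrev L := Fin k × Bool

/-- The inverse of a letter. -/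
def linv (a : L k) : L k := (a.1, !a.2)

/-- A right-infinite word is (freely) reduced if no letter is followed by its inverse. -/
def Red (x : ℕ → L k) : Prop := ∀ n, x (n + 1) ≠ linv k (x n)

/-- The boundary `∂F`: the set of infinite freely reduced words in the alphabet `A`. -/
def Boundary : Type := { x : ℕ → L k // Red k x }

instance : TopologicalSpace (Boundary k) :=
  inferInstanceAs (TopologicalSpace { x : ℕ → L k // Red k x })

instance : MeasurableSpace (Boundary k) := borel _

instance : BorelSpace (Boundary k) := ⟨rfl⟩

/-- The free group of rank `k`. -/
abbrev F := FreeGroup (Fin k)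

/-- The word length `|v|` of an element of `F`. -/
def wordLength (v : F k) : ℕ := v.toWord.length

/-- The cyclically reduced length `‖v‖`: the minimal word length among conjugates of `v`. -/
def cyclLength (v : F k) : ℕ := sInf { n | ∃ g : F k, wordLength k (g * v * g⁻¹) = n }

/-- The cylinder `Cyl v ⊆ ∂F` of rays starting with the reduced word of `v`. -/
def Cyl (v : F k) : Set (Boundary k) :=
  { x | ∀ i : Fin v.toWord.length, x.1 i = v.toWord.get i }

/-- The shift deleting the first letter of a ray. -/
def shift (x : ℕ → L k) : ℕ → L k := fun n => x (n + 1)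

/-- Prepending a letter to a ray. -/
def cons (a : L k) (x : ℕ → L k) : ℕ → L k
  | 0 => a
  | n + 1 => x n

/-- Prepending a (reversed) finite word to a ray, performing free reduction. -/
def prependAux : List (L k) → (ℕ → L k) → ℕ → L k
  | [], x => x
  | a :: r, x => prependAux r (if x 0 = linv k a then shift k x else cons k a x)

theorem red_shift {x : ℕ → L k} (hx : Red k x) : Red k (shift k x) :=
  fun n => hx (n + 1)

theorem red_cons {a : L k} {x : ℕ → L k} (hx : Red k x) (h : x 0 ≠ linv k a) :
    Red k (cons k a x) := by
  intro n
  cases n with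
  | zero => exact h
  | succ m => exact hx m

theorem red_prependAux : ∀ (r : List (L k)) {x : ℕ → L k}, Red k x → Red k (prependAux k r x)
  | [], _, hx => hx
  | a :: r, x, hx => by
    by_cases h : x 0 = linv k a
    · simp only [prependAux, if_pos h]
      exact red_prependAux r (red_shift k hx)
    · simp only [prependAux, if_neg h]
      exact red_prependAux r (red_cons k hx h)

/-- The left-translation action of `F` on `∂F`: concatenate and freely reduce. -/
def act (g : F k) (x : Boundary k) : Boundary k :=
  ⟨prependAux k g.toWord.reverse x.1, red_prependAux k _ x.2⟩

/-- The shift map `T : ∂F → ∂F`. -/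
def Tmap (x : Boundary k) : Boundary k := ⟨shift k x.1, red_shift k x.2⟩

/-- The double boundary `∂²F`, as the complement of the diagonal. -/
def D2 : Set (Boundary k × Boundary k) := { p | p.1 ≠ p.2 }

/-- The diagonal action of `F` on `∂F × ∂F`. -/
def actPair (g : F k) (p : Boundary k × Boundary k) : Boundary k × Boundary k :=
  (act k g p.1, act k g p.2)

/-- The cylinder `Cyl[1,w]` of geodesics through the segment from `1` to `w`. -/
def baseCyl (w : F k) : Set (Boundary k × Boundary k) :=
  { p | p.1.1 0 ≠ p.2.1 0 ∧ p.2 ∈ Cyl k w }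

/-- The base-ball `B = Cyl[1,1]` of geodesics through the base point. -/
def baseBall : Set (Boundary k × Boundary k) := baseCyl k 1

/-- The cylinder `Cyl[x,y] = x · Cyl[1, x⁻¹y]`. -/
def Cyl2 (x y : F k) : Set (Boundary k × Boundary k) :=
  actPair k x '' baseCyl k (x⁻¹ * y)

/-- A geodesic current: a Borel measure on `∂F × ∂F` giving no mass to the diagonal,
invariant under the diagonal `F`-action, and finite on compact subsets of `∂²F`. -/
def IsCurrent (η : Measure (Boundary k × Boundary k)) : Prop :=
  η { p | p.1 = p.2 } = 0 ∧
  (∀ g : F k, ∀ W : Set (Boundary k × Boundary k), MeasurableSet W →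
    η (actPair k g ⁻¹' W) = η W) ∧
  (∀ K : Set (Boundary k × Boundary k), K ⊆ D2 k → IsCompact K → η K < ⊤)

/-- The element of `F` given by the first `n` letters of a ray. -/
def prefixEl (x : Boundary k) (n : ℕ) : F k :=
  FreeGroup.mk (List.ofFn fun i : Fin n => x.1 i)

/-- `b : ∂F → ∂F` is the boundary extension of the automorphism `Φ`: for every ray `x`
and every `m`, the length-`m` prefix of `b x` is the length-`m` prefix of the reduced
word of `Φ (x|_n)` for all sufficiently large `n`. -/
def IsBdryExt (Φ : F k ≃* F k) (b : Boundary k → Boundary k) : Prop :=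
  ∀ x : Boundary k, ∀ m : ℕ, ∃ N : ℕ, ∀ n ≥ N,
    (Φ (prefixEl k x n)).toWord.take m = List.ofFn fun i : Fin m => (b x).1 i

/-- The map `∂Φ × ∂Φ` on pairs. -/
def pairMap (b : Boundary k → Boundary k) (p : Boundary k × Boundary k) :
    Boundary k × Boundary k := (b p.1, b p.2)

/-- The length of an automorphism with boundary map `b`, w.r.t. the current `η`:
`L(Φ) = η((∂Φ × ∂Φ)⁻¹ B)`. -/
def autLen (η : Measure (Boundary k × Boundary k)) (b : Boundary k → Boundary k) : ℝ≥0∞ :=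
  η (pairMap k b ⁻¹' baseBall k)

/-- The subgroup of inner automorphisms. -/
abbrev Inn : Subgroup (MulAut (F k)) := (MulAut.conj : F k →* MulAut (F k)).range

/-- `Out(F) = Aut(F)/Inn(F)` as a coset space. -/
abbrev OutQ := MulAut (F k) ⧸ Inn k

/-- A simple automorphism: induced by a permutation of the basis, or inner. -/
def SimpleAut (Φ : MulAut (F k)) : Prop :=
  (∃ σ : Equiv.Perm (Fin k), ∀ i, Φ (FreeGroup.of i) = FreeGroup.of (σ i)) ∨
  (∃ v : F k, ∀ x, Φ x = v * x * v⁻¹)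

/-- A Whitehead automorphism of the second kind. -/
def Whitehead2 (τ : MulAut (F k)) : Prop :=
  ∃ a : Fin k, ∀ i : Fin k,
    τ (FreeGroup.of i) = FreeGroup.of i ∨
    τ (FreeGroup.of i) = FreeGroup.of i * FreeGroup.of a ∨
    τ (FreeGroup.of i) = (FreeGroup.of a)⁻¹ * FreeGroup.of i ∨
    τ (FreeGroup.of i) = (FreeGroup.of a)⁻¹ * FreeGroup.of i * FreeGroup.of a

/-- The space of frequency measures: finite `T`-invariant Borel measures on `∂F`. -/
def FreqM : Type :=
  { μ : Measure (Boundary k) //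
    IsFiniteMeasure μ ∧ ∀ W : Set (Boundary k), MeasurableSet W → μ (Tmap k ⁻¹' W) = μ W }

/-- The space of geodesic currents. -/
def Currents : Type := { η : Measure (Boundary k × Boundary k) // IsCurrent k η }

/-- Continuous functions on `∂F × ∂F` with compact support contained in `∂²F`;
these are the test functions for the weak-* topology on currents. -/
def TestF : Type :=
  { φ : Boundary k × Boundary k → ℝ //
    Continuous φ ∧ IsCompact (tsupport φ) ∧ tsupport φ ⊆ D2 k }

/-- The weak-* topology on frequency measures. -/
instance : TopologicalSpace (FreqM k) :=
  ⨅ φ : C(Boundary k, ℝ),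
    TopologicalSpace.induced (fun μ : FreqM k => ∫ x, φ x ∂μ.1) inferInstance

/-- The weak-* topology on geodesic currents. -/
instance : TopologicalSpace (Currents k) :=
  ⨅ φ : TestF k,
    TopologicalSpace.induced (fun η : Currents k => ∫ p, φ.1 p ∂η.1) inferInstance

/-- Convergence of a sequence of group elements (as reduced words) to a boundary ray. -/
def WordTendsto (pn : ℕ → F k) (p : Boundary k) : Prop :=
  ∀ m : ℕ, ∃ N : ℕ, ∀ n ≥ N, (pn n).toWord.take m = List.ofFn fun i : Fin m => p.1 i

/-- The length of the maximal common initial segment of two rays. -/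
def commonLen (p : Boundary k × Boundary k) : ℕ :=
  sSup { m : ℕ | ∀ i < m, p.1.1 i = p.2.1 i }

/-- A single letter as an element of `F`. -/
def el (a : L k) : F k := FreeGroup.mk [a]

/-- The product of per-letter constants over the reduced word of `w`. -/
def Cprod (C : L k → ℝ≥0) (w : F k) : ℝ≥0 := (w.toWord.map C).prod

/-! ### Auxiliary list-level lemmas -/

instance : Countable (F k) := Function.Injective.countable (FreeGroup.toWord_injective)

/-- A finite word is reduced. -/
def RedList (l : List (L k)) : Prop := List.Chain' (fun a b => b ≠ linv k a) l

@[simp] lemma linv_linv (a : L k) : linv k (linv k a) = a := by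
  cases a; simp [linv]

lemma linv_ne_comm {a b : L k} (h : b ≠ linv k a) : a ≠ linv k b := by
  intro hab; apply h; rw [hab, linv_linv]

/-- reduce fixes reduced words. -/
lemma reduce_eq_self {l : List (L k)} (h : RedList k l) : FreeGroup.reduce l = l := by
  induction l with
  | nil => rfl
  | cons a l ih =>
    have h' : RedList k l := h.tail
    rw [FreeGroup.reduce.cons, ih h']
    cases l with
    | nil => rfl
    | cons b t =>
      have hab : b ≠ linv k a := (List.isChain_cons_cons.mp h).1
      have : ¬(a.1 = b.1 ∧ a.2 = !b.2) := by
        intro ⟨h1, h2⟩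
        exact linv_ne_comm k hab (by cases a; cases b; simp at h1 h2; simp [linv, h1, h2])
      simp only [this, if_false]

lemma toWord_mk {l : List (L k)} (h : RedList k l) : (FreeGroup.mk l).toWord = l := by
  rw [FreeGroup.toWord_mk, reduce_eq_self k h]

/-- The inverse word. -/
def invWord (l : List (L k)) : List (L k) := (l.map (linv k)).reverse

lemma invWord_eq_invRev (l : List (L k)) : invWord k l = FreeGroup.invRev l := by
  simp [invWord, FreeGroup.invRev, linv]

@[simp] lemma invWord_invWord (l : List (L k)) : invWord k (invWord k l) = l := by
  rw [invWord_eq_invRev, invWord_eq_invRev, FreeGroup.invRev_invRev]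

lemma redList_invWord {l : List (L k)} (h : RedList k l) : RedList k (invWord k l) := by
  unfold RedList invWord List.Chain'
  rw [List.isChain_reverse, List.isChain_map]
  refine List.IsChain.imp ?_ h
  intro a b hab
  show linv k a ≠ linv k (linv k b)
  rw [linv_linv]
  exact fun hc => hab hc.symm

@[simp] lemma invWord_append (l₁ l₂ : List (L k)) :
    invWord k (l₁ ++ l₂) = invWord k l₂ ++ invWord k l₁ := by
  simp [invWord]

@[simp] lemma invWord_concat (l : List (L k)) (a : L k) :
    invWord k (l ++ [a]) = linv k a :: invWord k l := by
  simp [invWord]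

lemma head?_invWord (l : List (L k)) :
    (invWord k l).head? = l.getLast?.map (linv k) := by
  rw [invWord, List.head?_reverse, List.getLast?_map]

/-- Appending a finite word (without reduction) in front of a ray. -/
def appendList (l : List (L k)) (x : ℕ → L k) : ℕ → L k := l.foldr (cons k) x

@[simp] lemma appendList_nil (x : ℕ → L k) : appendList k [] x = x := rfl

@[simp] lemma appendList_cons (a : L k) (l : List (L k)) (x : ℕ → L k) :
    appendList k (a :: l) x = cons k a (appendList k l x) := rfl

lemma appendList_append (l₁ l₂ : List (L k)) (x : ℕ → L k) :
    appendList k (l₁ ++ l₂) x = appendList k l₁ (appendList k l₂ x) := by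
  simp [appendList, List.foldr_append]

@[simp] lemma cons_zero (a : L k) (x : ℕ → L k) : cons k a x 0 = a := rfl
@[simp] lemma cons_succ (a : L k) (x : ℕ → L k) (n : ℕ) : cons k a x (n + 1) = x n := rfl
@[simp] lemma shift_cons (a : L k) (x : ℕ → L k) : shift k (cons k a x) = x := rfl

lemma appendList_lt {l : List (L k)} {x : ℕ → L k} : ∀ {i : ℕ} (h : i < l.length),
    appendList k l x i = l.get ⟨i, h⟩ := by
  induction l with
  | nil => intro i h; simp at h
  | cons a l ih =>
    intro i h
    cases i with
    | zero => rfl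
    | succ j => simpa using ih (by simpa using h)

lemma appendList_ge (l : List (L k)) (x : ℕ → L k) (i : ℕ) :
    appendList k l x (l.length + i) = x i := by
  induction l with
  | nil => simp
  | cons a l ih => simpa [Nat.succ_add] using ih

/-! ### Free reduction of prepended words -/

lemma prependAux_append (l₁ l₂ : List (L k)) (x : ℕ → L k) :
    prependAux k (l₁ ++ l₂) x = prependAux k l₂ (prependAux k l₁ x) := by
  induction l₁ generalizing x with
  | nil => rfl
  | cons a r ih =>
    simp only [List.cons_append, prependAux]
    exact ih _

/-- No cancellation: prepending a reduced word whose last letter is not cancelled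
by the ray's head simply concatenates. -/
lemma prependAux_reverse_eq_appendList : ∀ {l : List (L k)} {x : ℕ → L k}, RedList k l →
    (∀ a ∈ l.getLast?, x 0 ≠ linv k a) → prependAux k l.reverse x = appendList k l x := by
  intro l
  induction l using List.reverseRecOn with
  | nil => intro x _ _; rfl
  | append_singleton l a ih =>
    intro x hred hlast
    have h0 : x 0 ≠ linv k a := hlast a (by rw [List.getLast?_concat]; rfl)
    rw [List.reverse_append, List.reverse_singleton, List.singleton_append]
    show prependAux k l.reverse (if x 0 = linv k a then shift k x else cons k a x)
        = appendList k (l ++ [a]) x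
    rw [if_neg h0, appendList_append, appendList_cons, appendList_nil]
    obtain ⟨h1, -, h3⟩ := List.isChain_append.mp hred
    exact ih h1 (fun b hb => by
      show a ≠ linv k b
      exact h3 b hb a (by simp))

/-- Full cancellation: prepending a word onto its formal inverse cancels completely. -/
lemma prependAux_reverse_cancel : ∀ (l : List (L k)) (r : ℕ → L k),
    prependAux k l.reverse (appendList k (invWord k l) r) = r := by
  intro l
  induction l using List.reverseRecOn with
  | nil => intro r; rfl
  | append_singleton l a ih =>
    intro r
    rw [List.reverse_append, List.reverse_singleton, List.singleton_append, invWord_concat,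
      appendList_cons]
    show prependAux k l.reverse
      (if cons k (linv k a) (appendList k (invWord k l) r) 0 = linv k a then _ else _) = r
    rw [if_pos (cons_zero k (linv k a) (appendList k (invWord k l) r)), shift_cons]
    exact ih r

/-- Reducedness of a concatenation. -/
lemma red_appendList {l : List (L k)} {r : ℕ → L k} (hl : RedList k l) (hr : Red k r)
    (hlast : ∀ a ∈ l.getLast?, r 0 ≠ linv k a) : Red k (appendList k l r) := by
  induction l with
  | nil => exact hr
  | cons a l ih =>
    rw [appendList_cons]
    refine red_cons k ?_ ?_
    · exact ih hl.tail (fun b hb => hlast b (by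
        cases l with
        | nil => simp at hb
        | cons c t => rwa [List.getLast?_cons_cons]))
    · cases l with
      | nil => exact hlast a rfl
      | cons c t =>
        show cons k c (appendList k t r) 0 ≠ linv k a
        rw [cons_zero]
        exact (List.isChain_cons_cons.mp hl).1

/-- Shift a ray by `n` letters. -/
def shiftN (n : ℕ) (x : ℕ → L k) : ℕ → L k := fun i => x (n + i)

lemma red_shiftN (n : ℕ) {x : ℕ → L k} (hx : Red k x) : Red k (shiftN k n x) := by
  intro i
  show x (n + (i + 1)) ≠ linv k (x (n + i))
  rw [← Nat.add_assoc]
  exact hx (n + i)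

lemma appendList_shiftN {l : List (L k)} {x : ℕ → L k}
    (h : ∀ i (hi : i < l.length), x i = l.get ⟨i, hi⟩) :
    appendList k l (shiftN k l.length x) = x := by
  funext j
  rcases lt_or_ge j l.length with hj | hj
  · rw [appendList_lt k hj]; exact (h j hj).symm
  · obtain ⟨i, rfl⟩ : ∃ i, j = l.length + i := ⟨j - l.length, (Nat.add_sub_cancel' hj).symm⟩
    rw [appendList_ge]; rfl

/-- Membership in a cylinder over a reduced list. -/
lemma mem_cyl_mk {l : List (L k)} (hl : RedList k l) (p : Boundary k) :
    p ∈ Cyl k (FreeGroup.mk l) ↔ ∀ i (hi : i < l.length), p.1 i = l.get ⟨i, hi⟩ := by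
  unfold Cyl
  rw [Set.mem_setOf_eq, toWord_mk k hl]
  exact ⟨fun h i hi => h ⟨i, hi⟩, fun h i => h i i.2⟩

lemma redList_prefix {x : ℕ → L k} (hx : Red k x) (n : ℕ) :
    RedList k (List.ofFn fun i : Fin n => x i) := by
  rw [RedList, List.Chain', List.isChain_iff_getElem]
  intro i hi
  simp only [List.getElem_ofFn]
  simp only [List.length_ofFn] at hi
  convert hx i using 2

/-! ### The cylinder `Cyl2` as a product -/

lemma getLast?_invWord (l : List (L k)) :
    (invWord k l).getLast? = l.head?.map (linv k) := by
  rw [invWord, List.getLast?_reverse, List.head?_map]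

lemma inv_mul_mk (w u u' : List (L k)) :
    (FreeGroup.mk (w ++ u))⁻¹ * FreeGroup.mk (w ++ u') = FreeGroup.mk (invWord k u ++ u') := by
  have h1 : (FreeGroup.mk (w ++ u))⁻¹ * FreeGroup.mk (w ++ u')
      = (FreeGroup.mk u)⁻¹ * FreeGroup.mk u' := by
    rw [← FreeGroup.mul_mk, ← FreeGroup.mul_mk, mul_inv_rev]
    group
  rw [h1, FreeGroup.inv_mk, ← invWord_eq_invRev, FreeGroup.mul_mk]

lemma prepend_cancel_mixed {w u' : List (L k)} (u : List (L k)) (hw : RedList k w)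
    (hjunc : ∀ a ∈ w.getLast?, ∀ c ∈ u'.head?, c ≠ linv k a)
    (hu' : u' ≠ []) (r : ℕ → L k) :
    prependAux k (w ++ u).reverse (appendList k (invWord k u ++ u') r)
      = appendList k (w ++ u') r := by
  rw [List.reverse_append, prependAux_append, appendList_append,
    prependAux_reverse_cancel, appendList_append]
  refine prependAux_reverse_eq_appendList k hw ?_
  intro a ha
  cases u' with
  | nil => exact absurd rfl hu'
  | cons c t => exact hjunc a ha c rfl

lemma prepend_cancel_full {w s t : List (L k)} {b : L k} (a : L k)
    (hy : RedList k (w ++ b :: t)) (r : ℕ → L k) :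
    prependAux k (w ++ a :: s).reverse (appendList k (invWord k (a :: s) ++ b :: t) r)
      = appendList k (w ++ b :: t) r := by
  obtain ⟨hw, -, hjunc⟩ := List.isChain_append.mp hy
  exact prepend_cancel_mixed k (a :: s) hw hjunc (by simp) r

lemma act_eq_appendList {l : List (L k)} (hl : RedList k l) (p : Boundary k)
    (h0 : ∀ a ∈ l.getLast?, p.1 0 ≠ linv k a) :
    (act k (FreeGroup.mk l) p).1 = appendList k l p.1 := by
  show prependAux k (FreeGroup.mk l).toWord.reverse p.1 = _
  rw [toWord_mk k hl]
  exact prependAux_reverse_eq_appendList k hl h0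

lemma cyl2_eq_prod {w s t : List (L k)} {a b : L k}
    (hx : RedList k (w ++ a :: s)) (hy : RedList k (w ++ b :: t)) (hab : a ≠ b) :
    Cyl2 k (FreeGroup.mk (w ++ a :: s)) (FreeGroup.mk (w ++ b :: t)) =
      (Cyl k (FreeGroup.mk (w ++ a :: s))) ×ˢ (Cyl k (FreeGroup.mk (w ++ b :: t))) := by
  classical
  set xl := w ++ a :: s with hxl
  set yl := w ++ b :: t with hyl
  set zl := invWord k (a :: s) ++ b :: t with hzl
  set c := (a :: s).getLast (by simp) with hc
  -- basic facts
  have hxr : RedList k (a :: s) := (List.isChain_append.mp hx).2.1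
  have hyr : RedList k (b :: t) := (List.isChain_append.mp hy).2.1
  have hzred : RedList k zl := by
    refine List.isChain_append.mpr ⟨redList_invWord k hxr, hyr, ?_⟩
    intro e he f hf
    rw [getLast?_invWord] at he
    simp only [List.head?_cons, Option.map_some, Option.mem_def, Option.some.injEq] at he hf
    rw [← he, ← hf, linv_linv]
    exact hab.symm
  have hzmk : (FreeGroup.mk xl)⁻¹ * FreeGroup.mk yl = FreeGroup.mk zl :=
    inv_mul_mk k w (a :: s) (b :: t)
  have hxlast : xl.getLast? = some c := by
    rw [hxl, List.getLast?_append_of_ne_nil _ (by simp : (a :: s) ≠ []),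
      List.getLast?_eq_getLast_of_ne_nil]
  have hzhead : zl.head? = some (linv k c) := by
    rw [hzl, List.head?_append_of_ne_nil _ (by simp [invWord] : invWord k (a :: s) ≠ []),
      head?_invWord, List.getLast?_eq_getLast_of_ne_nil (by simp : (a :: s) ≠ [])]
    rfl
  have hzne : zl ≠ [] := by simp [hzl, invWord]
  have hzget0 : ∀ h : 0 < zl.length, zl.get ⟨0, h⟩ = linv k c := by
    intro h
    rw [List.get_mk_zero, ← Option.some_inj, ← List.head?_eq_head, hzhead]
  have hd : (b :: t).getLast? = some ((b :: t).getLast (by simp)) :=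
    List.getLast?_eq_getLast_of_ne_nil _
  have hzlast : zl.getLast? = some ((b :: t).getLast (by simp)) := by
    rw [hzl, List.getLast?_append_of_ne_nil _ (by simp : (b :: t) ≠ []), hd]
  have hylast : yl.getLast? = some ((b :: t).getLast (by simp)) := by
    rw [hyl, List.getLast?_append_of_ne_nil _ (by simp : (b :: t) ≠ []), hd]
  have hxlen : 0 < xl.length := by simp [hxl]
  have hylen : 0 < yl.length := by simp [hyl]
  -- last-letter facts for rays in cylinders
  have ray_last : ∀ (p : Boundary k) (l : List (L k)) (hl : RedList k l) (h0 : 0 < l.length),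
      p ∈ Cyl k (FreeGroup.mk l) → ∀ e ∈ l.getLast?, p.1 l.length ≠ linv k e := by
    intro p l hl h0 hp e he
    have hle : l ≠ [] := by intro h; rw [h] at h0; simp at h0
    have h1 : p.1 (l.length - 1) = e := by
      rw [(mem_cyl_mk k hl p).mp hp (l.length - 1) (by omega)]
      rw [List.getLast?_eq_getLast_of_ne_nil hle, Option.mem_def, Option.some_inj] at he
      rw [← he, List.getLast_eq_getElem, List.get_eq_getElem]
    have h2 := p.2 (l.length - 1)
    rwa [Nat.sub_add_cancel h0, h1] at h2
  have hzlen0 : 0 < zl.length := List.length_pos_iff.mpr hzne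
  ext ⟨p, q⟩
  simp only [Set.mem_prod]
  constructor
  · rintro ⟨⟨p₀, q₀⟩, ⟨h0, hq₀⟩, heq⟩
    rw [hzmk] at hq₀
    have hp_eq : act k (FreeGroup.mk xl) p₀ = p := congrArg Prod.fst heq
    have hq_eq : act k (FreeGroup.mk xl) q₀ = q := congrArg Prod.snd heq
    set rq := shiftN k zl.length q₀.1 with hrq
    have hq₀a : appendList k zl rq = q₀.1 :=
      appendList_shiftN k ((mem_cyl_mk k hzred q₀).mp hq₀)
    have hqv : q.1 = appendList k yl rq := by
      rw [← hq_eq]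
      show prependAux k (FreeGroup.mk xl).toWord.reverse q₀.1 = _
      rw [toWord_mk k hx, ← hq₀a]
      exact prepend_cancel_full k a hy rq
    have hq0head : q₀.1 0 = linv k c := by
      rw [← hq₀a, appendList_lt k hzlen0]
      exact hzget0 _
    have hpv : p.1 = appendList k xl p₀.1 := by
      rw [← hp_eq]
      refine act_eq_appendList k hx p₀ ?_
      intro e he
      rw [hxlast, Option.mem_def, Option.some_inj] at he
      rw [← he, ← hq0head]
      exact h0
    constructor
    · rw [mem_cyl_mk k hx]
      intro i hi
      rw [hpv, appendList_lt k hi]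
    · rw [mem_cyl_mk k hy]
      intro i hi
      rw [hqv, appendList_lt k hi]
  · rintro ⟨hp, hq⟩
    set rp := shiftN k xl.length p.1 with hrp
    set rq := shiftN k yl.length q.1 with hrq
    have hpa : appendList k xl rp = p.1 := appendList_shiftN k ((mem_cyl_mk k hx p).mp hp)
    have hqa : appendList k yl rq = q.1 := appendList_shiftN k ((mem_cyl_mk k hy q).mp hq)
    have hplast : ∀ e ∈ xl.getLast?, p.1 xl.length ≠ linv k e := ray_last p xl hx hxlen hp
    have hqlast : ∀ e ∈ yl.getLast?, q.1 yl.length ≠ linv k e := ray_last q yl hy hylen hq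
    have hrq0 : rq 0 = q.1 yl.length := by
      show q.1 (yl.length + 0) = _
      rw [Nat.add_zero]
    have hrp0 : rp 0 = p.1 xl.length := by
      show p.1 (xl.length + 0) = _
      rw [Nat.add_zero]
    have hq₀red : Red k (appendList k zl rq) := by
      refine red_appendList k hzred (red_shiftN k _ q.2) ?_
      intro e he
      rw [hzlast] at he
      rw [hrq0]
      exact hqlast e (by rw [hylast]; exact he)
    refine ⟨(⟨rp, red_shiftN k _ p.2⟩, ⟨appendList k zl rq, hq₀red⟩), ⟨?_, ?_⟩, ?_⟩
    · show rp 0 ≠ appendList k zl rq 0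
      have h1 : appendList k zl rq 0 = linv k c := by
        rw [appendList_lt k hzlen0]
        exact hzget0 _
      rw [h1, hrp0]
      exact hplast c (by rw [hxlast]; rfl)
    · show _ ∈ Cyl k ((FreeGroup.mk xl)⁻¹ * FreeGroup.mk yl)
      rw [hzmk, mem_cyl_mk k hzred]
      intro i hi
      exact appendList_lt k hi
    · have e1 : (act k (FreeGroup.mk xl) ⟨rp, red_shiftN k _ p.2⟩).1 = p.1 := by
        refine (act_eq_appendList k hx _ ?_).trans hpa
        intro e he
        rw [hxlast, Option.mem_def, Option.some_inj] at he
        rw [show (⟨rp, red_shiftN k _ p.2⟩ : Boundary k).1 0 = p.1 xl.length from hrp0, ← he]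
        exact hplast c (by rw [hxlast]; rfl)
      have e2 : (act k (FreeGroup.mk xl) ⟨appendList k zl rq, hq₀red⟩).1 = q.1 := by
        show prependAux k (FreeGroup.mk xl).toWord.reverse (appendList k zl rq) = q.1
        rw [toWord_mk k hx, ← hqa]
        exact prepend_cancel_full k a hy rq
      exact Prod.ext (Subtype.ext e1) (Subtype.ext e2)

/-! ### The Borel σ-algebra is generated by cylinders -/

lemma isOpen_cyl (v : F k) : IsOpen (Cyl k v) := by
  have h : Cyl k v = Subtype.val ⁻¹'
      {f : ℕ → L k | ∀ i : Fin v.toWord.length, f i = v.toWord.get i} := rfl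
  rw [h]
  refine IsOpen.preimage continuous_subtype_val ?_
  have h2 : {f : ℕ → L k | ∀ i : Fin v.toWord.length, f i = v.toWord.get i}
      = ⋂ i : Fin v.toWord.length, (fun f : ℕ → L k => f i) ⁻¹' {v.toWord.get i} := by
    ext f
    simp [Set.mem_iInter]
  rw [h2]
  exact isOpen_iInter_of_finite fun i =>
    (isOpen_discrete _).preimage (continuous_apply (i : ℕ))

lemma measurableSet_cyl (v : F k) : MeasurableSet (Cyl k v) :=
  (isOpen_cyl k v).measurableSet

lemma cyl_prefix (x : Boundary k) (n : ℕ) :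
    Cyl k (FreeGroup.mk (List.ofFn fun i : Fin n => x.1 i))
      = {p : Boundary k | ∀ i < n, p.1 i = x.1 i} := by
  have hred := redList_prefix k x.2 n
  ext p
  rw [Set.mem_setOf_eq, mem_cyl_mk k hred]
  constructor
  · intro h i hi
    have h' := h i (by simpa using hi)
    rw [List.get_ofFn] at h'
    simpa using h'
  · intro h i hi
    rw [List.get_ofFn]
    simpa using h i (by simpa using hi)

lemma borel_eq_cyl :
    (inferInstance : MeasurableSpace (Boundary k))
      = MeasurableSpace.generateFrom {S | ∃ v : F k, S = Cyl k v} := by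
  have hb : (inferInstance : MeasurableSpace (Boundary k)) = borel (Boundary k) := rfl
  have hb2 : borel (Boundary k)
      = MeasurableSpace.generateFrom {s : Set (Boundary k) | IsOpen s} := rfl
  rw [hb, hb2]
  refine le_antisymm ?_ ?_
  · refine MeasurableSpace.generateFrom_le ?_
    intro U hU
    have key : ∀ x ∈ U, ∃ v : F k, x ∈ Cyl k v ∧ Cyl k v ⊆ U := by
      intro x hx
      obtain ⟨V, hV, hVU⟩ := isOpen_induced_iff.mp hU
      have hxV : x.1 ∈ V := by rw [← hVU] at hx; exact hx
      obtain ⟨I, u, h1, h2⟩ := isOpen_pi_iff.mp hV x.1 hxV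
      set n := I.sup id + 1 with hn
      refine ⟨FreeGroup.mk (List.ofFn fun i : Fin n => x.1 i), ?_, ?_⟩
      · rw [cyl_prefix]
        intro i _
        rfl
      · rw [cyl_prefix]
        intro p hp
        have hpV : p.1 ∈ V := by
          refine h2 ?_
          intro i hi
          have hin : i < n := by
            have : i ≤ I.sup id := Finset.le_sup (f := id) hi
            omega
          rw [hp i hin]
          exact (h1 i hi).2
        rw [← hVU]
        exact hpV
    have hU' : U = ⋃ v : {v : F k // Cyl k v ⊆ U}, Cyl k v.1 := by
      ext x
      constructor
      · intro hx
        obtain ⟨v, hv1, hv2⟩ := key x hx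
        exact Set.mem_iUnion.mpr ⟨⟨v, hv2⟩, hv1⟩
      · intro hx
        obtain ⟨v, hv⟩ := Set.mem_iUnion.mp hx
        exact v.2 hv
    rw [hU']
    exact MeasurableSet.iUnion fun v =>
      MeasurableSpace.measurableSet_generateFrom ⟨v.1, rfl⟩
  · refine MeasurableSpace.generateFrom_le ?_
    rintro S ⟨v, rfl⟩
    exact MeasurableSpace.measurableSet_generateFrom (isOpen_cyl k v)

/-- Cylinders are countably spanning. -/
lemma cyl_spanning : IsCountablySpanning {S : Set (Boundary k) | ∃ v : F k, S = Cyl k v} := by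
  refine ⟨fun _ => Cyl k 1, fun n => ⟨1, rfl⟩, ?_⟩
  rw [Set.iUnion_const]
  ext x
  simp only [Set.mem_univ, iff_true]
  intro i
  exact absurd i.2 (by simp [FreeGroup.toWord_one])

lemma prod_msp_eq :
    (inferInstance : MeasurableSpace (Boundary k × Boundary k))
      = MeasurableSpace.generateFrom
          (Set.image2 (· ×ˢ ·) {S : Set (Boundary k) | ∃ v : F k, S = Cyl k v}
            {S : Set (Boundary k) | ∃ v : F k, S = Cyl k v}) := by
  have h := generateFrom_prod_eq (cyl_spanning k) (cyl_spanning k)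
  rw [← h]
  show @Prod.instMeasurableSpace _ _ (inferInstance) (inferInstance) = _
  rw [borel_eq_cyl k]

/-! ### Cylinder intersections, `commonLen`, arithmetic -/

lemma mem_cyl (v : F k) (p : Boundary k) :
    p ∈ Cyl k v ↔ ∀ i (hi : i < v.toWord.length), p.1 i = v.toWord.get ⟨i, hi⟩ :=
  ⟨fun h i hi => h ⟨i, hi⟩, fun h i => h i i.2⟩

lemma redList_reduce (l : List (L k)) : RedList k (FreeGroup.reduce l) := by
  induction l with
  | nil => exact List.isChain_nil
  | cons a l ih =>
    rw [FreeGroup.reduce.cons]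
    rcases hr : FreeGroup.reduce l with _ | ⟨hd, tl⟩
    · exact List.isChain_singleton a
    · rw [hr] at ih
      show RedList k (if a.1 = hd.1 ∧ a.2 = !hd.2 then tl else a :: hd :: tl)
      by_cases hc : a.1 = hd.1 ∧ a.2 = !hd.2
      · rw [if_pos hc]
        exact ih.tail
      · rw [if_neg hc]
        refine List.isChain_cons_cons.mpr ⟨?_, ih⟩
        intro h
        refine hc ?_
        rcases a with ⟨a1, a2⟩; rcases hd with ⟨h1, h2⟩
        simp only [linv, Prod.mk.injEq] at h
        exact ⟨h.1.symm, by rw [h.2]; simp⟩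

lemma redList_toWord (v : F k) : RedList k v.toWord := by
  rw [← FreeGroup.reduce_toWord]
  exact redList_reduce k _

lemma cyl_subset {v v' : F k} (hlen : v.toWord.length ≤ v'.toWord.length)
    (hagree : ∀ i (h : i < v.toWord.length),
      v.toWord.get ⟨i, h⟩ = v'.toWord.get ⟨i, lt_of_lt_of_le h hlen⟩) :
    Cyl k v' ⊆ Cyl k v := by
  intro p hp i
  have h1 := hp ⟨i.1, lt_of_lt_of_le i.2 hlen⟩
  rw [hagree i.1 i.2]
  exact h1

lemma cyl_inter_cases (v v' : F k) :
    Cyl k v ∩ Cyl k v' = ∅ ∨ Cyl k v ∩ Cyl k v' = Cyl k v ∨ Cyl k v ∩ Cyl k v' = Cyl k v' := by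
  by_cases hne : (Cyl k v ∩ Cyl k v').Nonempty
  · obtain ⟨p, hp, hp'⟩ := hne
    rcases le_total v.toWord.length v'.toWord.length with h | h
    · right; right
      refine Set.inter_eq_self_of_subset_right (cyl_subset k h ?_)
      intro i hi
      rw [← hp ⟨i, hi⟩, ← hp' ⟨i, lt_of_lt_of_le hi h⟩]
    · right; left
      refine Set.inter_eq_self_of_subset_left (cyl_subset k h ?_)
      intro i hi
      rw [← hp' ⟨i, hi⟩, ← hp ⟨i, lt_of_lt_of_le hi h⟩]
  · left
    exact Set.not_nonempty_iff_eq_empty.mp hne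

lemma cyl_inter_nonempty {v v' : F k} (h : (Cyl k v ∩ Cyl k v').Nonempty) :
    ∃ u : F k, Cyl k v ∩ Cyl k v' = Cyl k u := by
  rcases cyl_inter_cases k v v' with h' | h' | h'
  · rw [h'] at h
    simp at h
  · exact ⟨v, h'⟩
  · exact ⟨v', h'⟩

lemma pi_system_cylProd :
    IsPiSystem (Set.image2 (· ×ˢ ·) {S : Set (Boundary k) | ∃ v : F k, S = Cyl k v}
      {S : Set (Boundary k) | ∃ v : F k, S = Cyl k v}) := by
  rintro S ⟨s1, ⟨v1, rfl⟩, t1, ⟨w1, rfl⟩, rfl⟩ T ⟨s2, ⟨v2, rfl⟩, t2, ⟨w2, rfl⟩, rfl⟩ hne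
  rw [Set.prod_inter_prod, Set.prod_nonempty_iff] at hne
  obtain ⟨u1, e1⟩ := cyl_inter_nonempty k hne.1
  obtain ⟨u2, e2⟩ := cyl_inter_nonempty k hne.2
  exact ⟨Cyl k u1, ⟨u1, rfl⟩, Cyl k u2, ⟨u2, rfl⟩, by rw [Set.prod_inter_prod, e1, e2]⟩

lemma cyl_mk_subset {l l' : List (L k)} (hl : RedList k l) (hl' : RedList k l')
    (hlen : l.length ≤ l'.length)
    (hagree : ∀ i (h : i < l.length), l.get ⟨i, h⟩ = l'.get ⟨i, lt_of_lt_of_le h hlen⟩) :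
    Cyl k (FreeGroup.mk l') ⊆ Cyl k (FreeGroup.mk l) := by
  intro p hp
  rw [mem_cyl_mk k hl'] at hp
  rw [mem_cyl_mk k hl]
  intro i hi
  rw [hagree i hi]
  exact hp i (lt_of_lt_of_le hi hlen)

/-- Intersecting the cylinder over `w ++ [a]` with any cylinder gives `∅` or a cylinder
over an extension `w ++ a :: s`. -/
lemma cyl_inter_extension {w : List (L k)} {a : L k} (hred : RedList k (w ++ [a])) (v : F k) :
    Cyl k (FreeGroup.mk (w ++ [a])) ∩ Cyl k v = ∅ ∨
    ∃ s : List (L k), RedList k (w ++ a :: s) ∧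
      Cyl k (FreeGroup.mk (w ++ [a])) ∩ Cyl k v = Cyl k (FreeGroup.mk (w ++ a :: s)) := by
  classical
  by_cases hne : (Cyl k (FreeGroup.mk (w ++ [a])) ∩ Cyl k v).Nonempty
  · right
    obtain ⟨p, hp, hpv⟩ := hne
    set lv := v.toWord with hlvdef
    have hlv : RedList k lv := redList_toWord k v
    have hv : v = FreeGroup.mk lv := (FreeGroup.mk_toWord).symm
    rw [hv] at hpv
    set m := (w ++ [a]).length with hm
    have hp' : ∀ i (hi : i < m), p.1 i = (w ++ [a]).get ⟨i, hi⟩ :=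
      (mem_cyl_mk k hred p).mp hp
    have hv' : ∀ i (hi : i < lv.length), p.1 i = lv.get ⟨i, hi⟩ :=
      (mem_cyl_mk k hlv p).mp hpv
    rcases le_total lv.length m with h | h
    · refine ⟨[], hred, ?_⟩
      have hsub : Cyl k (FreeGroup.mk (w ++ [a])) ⊆ Cyl k (FreeGroup.mk lv) := by
        refine cyl_mk_subset k hlv hred h ?_
        intro i hi
        rw [← hv' i hi, ← hp' i (lt_of_lt_of_le hi h)]
      rw [hv, Set.inter_eq_self_of_subset_left hsub]
    · have hvs : lv = (w ++ [a]) ++ lv.drop m := by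
        conv_lhs => rw [← List.take_append_drop m lv]
        congr 1
        apply List.ext_getElem
        · rw [List.length_take]
          omega
        · intro i h1 h2
          rw [List.getElem_take]
          have e1 := hv' i (by rw [List.length_take] at h1; omega)
          have e2 := hp' i h2
          rw [List.get_eq_getElem] at e1 e2
          rw [← e1, ← e2]
      have hcons : (w ++ [a]) ++ lv.drop m = w ++ a :: lv.drop m := by simp
      refine ⟨lv.drop m, ?_, ?_⟩
      · rw [← hcons, ← hvs]
        exact hlv
      · have hsub : Cyl k (FreeGroup.mk lv) ⊆ Cyl k (FreeGroup.mk (w ++ [a])) := by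
          refine cyl_mk_subset k hred hlv h ?_
          intro i hi
          rw [← hv' i (lt_of_lt_of_le hi h), ← hp' i hi]
        rw [hv, Set.inter_eq_self_of_subset_right hsub]
        conv_lhs => rw [hvs, hcons]
  · left
    exact Set.not_nonempty_iff_eq_empty.mp hne

lemma commonLen_eq {p : Boundary k × Boundary k} {n : ℕ}
    (h : ∀ i < n, p.1.1 i = p.2.1 i) (h' : p.1.1 n ≠ p.2.1 n) : commonLen k p = n := by
  have hset : {m : ℕ | ∀ i < m, p.1.1 i = p.2.1 i} = Set.Iic n := by
    ext m
    simp only [Set.mem_setOf_eq, Set.mem_Iic]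
    constructor
    · intro hm
      by_contra hc
      push_neg at hc
      exact h' (hm n hc)
    · intro hm i hi
      exact h i (lt_of_lt_of_le hi hm)
  rw [commonLen, hset, csSup_Iic]

lemma key_arith (K R : ℝ≥0∞) (hK0 : K ≠ 0) (hKt : K ≠ ⊤) (hR0 : R ≠ 0) (hRt : R ≠ ⊤)
    (n σ τ : ℕ) :
    (K * R ^ (σ + τ + 1))⁻¹
      = K * R ^ (2 * (n : ℤ) - 1) * ((K * R ^ (n + σ))⁻¹ * (K * R ^ (n + τ))⁻¹) := by
  have hz : ∀ m : ℕ, (K * R ^ m)⁻¹ = K⁻¹ * R ^ (-(m : ℤ)) := fun m => by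
    rw [ENNReal.mul_inv (Or.inl hK0) (Or.inl hKt), ← zpow_natCast R m,
      ENNReal.zpow_neg]
  rw [hz, hz, hz]
  have e1 : K * R ^ (2 * (n : ℤ) - 1) *
        (K⁻¹ * R ^ (-((n + σ : ℕ) : ℤ)) * (K⁻¹ * R ^ (-((n + τ : ℕ) : ℤ))))
      = (K * K⁻¹) * (K⁻¹ * (R ^ (2 * (n : ℤ) - 1) * R ^ (-((n + σ : ℕ) : ℤ)) *
          R ^ (-((n + τ : ℕ) : ℤ)))) := by
    ring
  rw [e1, ENNReal.mul_inv_cancel hK0 hKt, one_mul,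
    ← ENNReal.zpow_add hR0 hRt, ← ENNReal.zpow_add hR0 hRt]
  congr 1
  push_cast
  ring

/-! ### The decomposition of `∂²F` into product cylinders -/

/-- Index for the partition of `∂²F`: a common prefix `w` and distinct next letters. -/
def PIdx : Type := {q : List (L k) × L k × L k //
  RedList k (q.1 ++ [q.2.1]) ∧ RedList k (q.1 ++ [q.2.2]) ∧ q.2.1 ≠ q.2.2}

instance : Countable (PIdx k) := by
  unfold PIdx
  infer_instance

/-- The partition piece indexed by `i`. -/
def PU (i : PIdx k) : Set (Boundary k × Boundary k) :=
  (Cyl k (FreeGroup.mk (i.1.1 ++ [i.1.2.1]))) ×ˢ (Cyl k (FreeGroup.mk (i.1.1 ++ [i.1.2.2])))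

lemma measurableSet_PU (i : PIdx k) : MeasurableSet (PU k i) :=
  ((isOpen_cyl k _).measurableSet).prod ((isOpen_cyl k _).measurableSet)

lemma mem_PU {i : PIdx k} {p : Boundary k × Boundary k} (hp : p ∈ PU k i) :
    (∀ j < i.1.1.length, p.1.1 j = p.2.1 j) ∧ p.1.1 i.1.1.length = i.1.2.1 ∧
      p.2.1 i.1.1.length = i.1.2.2 ∧
      (∀ j (hj : j < i.1.1.length), p.1.1 j = i.1.1.get ⟨j, hj⟩) := by
  obtain ⟨⟨w, a, b⟩, h1, h2, h3⟩ := i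
  obtain ⟨hp1, hp2⟩ := hp
  rw [mem_cyl_mk k h1] at hp1
  rw [mem_cyl_mk k h2] at hp2
  have hl : ∀ j, j < w.length → j < (w ++ [a]).length := by
    intro j hj; simp only [List.length_append, List.length_cons, List.length_nil]; omega
  have hl' : ∀ j, j < w.length → j < (w ++ [b]).length := by
    intro j hj; simp only [List.length_append, List.length_cons, List.length_nil]; omega
  have key1 : ∀ j (hj : j < w.length), p.1.1 j = w.get ⟨j, hj⟩ := by
    intro j hj
    rw [hp1 j (hl j hj), List.get_eq_getElem, List.get_eq_getElem,
      List.getElem_append_left hj]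
  have key2 : ∀ j (hj : j < w.length), p.2.1 j = w.get ⟨j, hj⟩ := by
    intro j hj
    rw [hp2 j (hl' j hj), List.get_eq_getElem, List.get_eq_getElem,
      List.getElem_append_left hj]
  refine ⟨fun j hj => by rw [key1 j hj, key2 j hj], ?_, ?_, key1⟩
  · rw [hp1 w.length (by simp), List.get_eq_getElem, List.getElem_concat_length rfl]
  · rw [hp2 w.length (by simp), List.get_eq_getElem, List.getElem_concat_length rfl]

lemma commonLen_PU {i : PIdx k} {p : Boundary k × Boundary k} (hp : p ∈ PU k i) :
    commonLen k p = i.1.1.length := by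
  obtain ⟨h1, h2, h3, -⟩ := mem_PU k hp
  refine commonLen_eq k h1 ?_
  rw [h2, h3]
  exact i.2.2.2

lemma PU_disjoint : Pairwise (Function.onFun Disjoint (PU k)) := by
  intro i j hij
  rw [Function.onFun, Set.disjoint_left]
  intro p hpi hpj
  apply hij
  obtain ⟨h1i, h2i, h3i, h4i⟩ := mem_PU k hpi
  obtain ⟨h1j, h2j, h3j, h4j⟩ := mem_PU k hpj
  have hlen : i.1.1.length = j.1.1.length := by
    rw [← commonLen_PU k hpi, ← commonLen_PU k hpj]
  have hw : i.1.1 = j.1.1 := by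
    apply List.ext_getElem hlen
    intro m hm1 hm2
    have := (h4i m hm1).symm.trans (h4j m hm2)
    simpa using this
  have ha : i.1.2.1 = j.1.2.1 := by
    rw [← h2i, ← h2j, hlen]
  have hb : i.1.2.2 = j.1.2.2 := by
    rw [← h3i, ← h3j, hlen]
  exact Subtype.ext (Prod.ext hw (Prod.ext ha hb))

lemma D2_subset_PU : D2 k ⊆ ⋃ i, PU k i := by
  classical
  intro p hp
  have hxy : p.1.1 ≠ p.2.1 := fun h => hp (Subtype.ext h)
  have hex : ∃ n, p.1.1 n ≠ p.2.1 n := by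
    by_contra hc
    push_neg at hc
    exact hxy (funext hc)
  set n := Nat.find hex with hn
  have hne : p.1.1 n ≠ p.2.1 n := Nat.find_spec hex
  have hagree : ∀ j < n, p.1.1 j = p.2.1 j := fun j hj =>
    not_ne_iff.mp (Nat.find_min hex hj)
  set w := List.ofFn (fun i : Fin n => p.1.1 i) with hwdef
  have hofn1 : w ++ [p.1.1 n] = List.ofFn (fun i : Fin (n + 1) => p.1.1 i) := by
    rw [List.ofFn_succ', List.concat_eq_append]
    rfl
  have hw2 : w = List.ofFn (fun i : Fin n => p.2.1 i) := by
    rw [hwdef]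
    exact congrArg _ (funext fun i => hagree i i.2)
  have hofn2 : w ++ [p.2.1 n] = List.ofFn (fun i : Fin (n + 1) => p.2.1 i) := by
    rw [hw2, List.ofFn_succ', List.concat_eq_append]
    rfl
  have hred1 : RedList k (w ++ [p.1.1 n]) := by
    rw [hofn1]
    exact redList_prefix k p.1.2 (n + 1)
  have hred2 : RedList k (w ++ [p.2.1 n]) := by
    rw [hofn2]
    exact redList_prefix k p.2.2 (n + 1)
  refine Set.mem_iUnion.mpr ⟨⟨(w, p.1.1 n, p.2.1 n), hred1, hred2, hne⟩, ?_, ?_⟩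
  · show p.1 ∈ Cyl k (FreeGroup.mk (w ++ [p.1.1 n]))
    rw [hofn1, cyl_prefix]
    exact fun i _ => rfl
  · show p.2 ∈ Cyl k (FreeGroup.mk (w ++ [p.2.1 n]))
    rw [hofn2, cyl_prefix]
    exact fun i _ => rfl

/-! ### The measure computation -/

lemma mk_ne_one {l : List (L k)} (hl : RedList k l) (hne : l ≠ []) : FreeGroup.mk l ≠ 1 := by
  intro h
  apply hne
  rw [← toWord_mk k hl, h, FreeGroup.toWord_one]

lemma K_facts (hk : 2 ≤ k) : (2 * (k : ℝ≥0∞)) ≠ 0 ∧ (2 * (k : ℝ≥0∞)) ≠ ⊤ ∧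
    (2 * (k : ℝ≥0∞) - 1) ≠ 0 ∧ (2 * (k : ℝ≥0∞) - 1) ≠ ⊤ := by
  have h1 : (2 * (k : ℝ≥0∞)) = ((2 * k : ℕ) : ℝ≥0∞) := by push_cast; ring
  have h2 : (2 * (k : ℝ≥0∞) - 1) = ((2 * k - 1 : ℕ) : ℝ≥0∞) := by
    rw [ENNReal.natCast_sub, h1, Nat.cast_one]
  refine ⟨?_, ?_, ?_, ?_⟩
  · rw [h1]; exact Nat.cast_ne_zero.mpr (by omega)
  · rw [h1]; exact ENNReal.natCast_ne_top _
  · rw [h2]; exact Nat.cast_ne_zero.mpr (by omega)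
  · rw [h2]; exact ENNReal.natCast_ne_top _

lemma redList_z {w s t : List (L k)} {a b : L k}
    (hx : RedList k (w ++ a :: s)) (hy : RedList k (w ++ b :: t)) (hab : a ≠ b) :
    RedList k (invWord k (a :: s) ++ b :: t) := by
  have hxr : RedList k (a :: s) := (List.isChain_append.mp hx).2.1
  have hyr : RedList k (b :: t) := (List.isChain_append.mp hy).2.1
  refine List.isChain_append.mpr ⟨redList_invWord k hxr, hyr, ?_⟩
  intro e he f hf
  rw [getLast?_invWord] at he
  simp only [List.head?_cons, Option.map_some, Option.mem_def, Option.some.injEq] at he hf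
  rw [← he, ← hf, linv_linv]
  exact hab.symm

lemma eta_prod_cyl (hk : 2 ≤ k) (μA : Measure (Boundary k)) [IsProbabilityMeasure μA]
    (hμA : ∀ v : F k, v ≠ 1 →
      μA (Cyl k v) = ((2 * k : ℝ≥0∞) * (2 * k - 1) ^ (wordLength k v - 1))⁻¹)
    (ηA : Measure (Boundary k × Boundary k))
    (hηA' : ∀ x y : F k, ηA (Cyl2 k x y) = μA (Cyl k (x⁻¹ * y)))
    {w s t : List (L k)} {a b : L k}
    (hx : RedList k (w ++ a :: s)) (hy : RedList k (w ++ b :: t)) (hab : a ≠ b) :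
    ηA ((Cyl k (FreeGroup.mk (w ++ a :: s))) ×ˢ (Cyl k (FreeGroup.mk (w ++ b :: t))))
      = (2 * k : ℝ≥0∞) * (2 * k - 1 : ℝ≥0∞) ^ (2 * (w.length : ℤ) - 1) *
        ((μA.prod μA) ((Cyl k (FreeGroup.mk (w ++ a :: s))) ×ˢ
          (Cyl k (FreeGroup.mk (w ++ b :: t))))) := by
  obtain ⟨hK0, hKt, hR0, hRt⟩ := K_facts k hk
  have hz : RedList k (invWord k (a :: s) ++ b :: t) := redList_z k hx hy hab
  have e1 : ηA ((Cyl k (FreeGroup.mk (w ++ a :: s))) ×ˢ (Cyl k (FreeGroup.mk (w ++ b :: t))))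
      = μA (Cyl k (FreeGroup.mk (invWord k (a :: s) ++ b :: t))) := by
    rw [← cyl2_eq_prod k hx hy hab, hηA', inv_mul_mk]
  rw [e1, Measure.prod_prod,
    hμA _ (mk_ne_one k hz (by simp [invWord])),
    hμA _ (mk_ne_one k hx (by simp)),
    hμA _ (mk_ne_one k hy (by simp))]
  have l1 : wordLength k (FreeGroup.mk (invWord k (a :: s) ++ b :: t)) - 1
      = s.length + t.length + 1 := by
    rw [wordLength, toWord_mk k hz]
    simp only [List.length_append, List.length_cons, invWord, List.length_reverse,
      List.length_map]
    omega
  have l2 : wordLength k (FreeGroup.mk (w ++ a :: s)) - 1 = w.length + s.length := by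
    rw [wordLength, toWord_mk k hx]
    simp only [List.length_append, List.length_cons]
    omega
  have l3 : wordLength k (FreeGroup.mk (w ++ b :: t)) - 1 = w.length + t.length := by
    rw [wordLength, toWord_mk k hy]
    simp only [List.length_append, List.length_cons]
    omega
  rw [l1, l2, l3]
  exact key_arith _ _ hK0 hKt hR0 hRt w.length s.length t.length

theorem uniform_current_density (k : ℕ) (hk : 2 ≤ k)
    (μA : Measure (Boundary k)) [IsProbabilityMeasure μA]
    (hμA : ∀ v : F k, v ≠ 1 →
      μA (Cyl k v) = ((2 * k : ℝ≥0∞) * (2 * k - 1) ^ (wordLength k v - 1))⁻¹)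
    (ηA : Measure (Boundary k × Boundary k)) (hηA : IsCurrent k ηA)
    (hηA' : ∀ x y : F k, ηA (Cyl2 k x y) = μA (Cyl k (x⁻¹ * y)))
    (W : Set (Boundary k × Boundary k)) (hW : MeasurableSet W) (hWD : W ⊆ D2 k) :
    ηA W = ∫⁻ p in W,
      (2 * k : ℝ≥0∞) * (2 * k - 1 : ℝ≥0∞) ^ (2 * (commonLen k p : ℤ) - 1)
        ∂(μA.prod μA) := by
  classical
  obtain ⟨hK0, hKt, hR0, hRt⟩ := K_facts k hk
  set f : Boundary k × Boundary k → ℝ≥0∞ :=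
    fun p => (2 * k : ℝ≥0∞) * (2 * k - 1 : ℝ≥0∞) ^ (2 * (commonLen k p : ℤ) - 1) with hf
  have hWU : W = ⋃ i : PIdx k, W ∩ PU k i := by
    rw [← Set.inter_iUnion]
    exact (Set.inter_eq_self_of_subset_left (fun p hp => D2_subset_PU k (hWD hp))).symm
  have hmeas : ∀ i : PIdx k, MeasurableSet (W ∩ PU k i) := fun i =>
    hW.inter (measurableSet_PU k i)
  have hdisj : Pairwise (Function.onFun Disjoint fun i : PIdx k => W ∩ PU k i) := fun i j hij =>
    Disjoint.mono Set.inter_subset_right Set.inter_subset_right (PU_disjoint k hij)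
  have key : ∀ i : PIdx k, ηA (W ∩ PU k i) = ∫⁻ p in W ∩ PU k i, f p ∂(μA.prod μA) := by
    rintro ⟨⟨w, a, b⟩, hia, hib, hiab⟩
    set i : PIdx k := ⟨(w, a, b), hia, hib, hiab⟩ with hi
    set c : ℝ≥0∞ := (2 * k : ℝ≥0∞) * (2 * k - 1 : ℝ≥0∞) ^ (2 * (w.length : ℤ) - 1) with hc
    have hPU : PU k i = (Cyl k (FreeGroup.mk (w ++ [a]))) ×ˢ (Cyl k (FreeGroup.mk (w ++ [b]))) :=
      rfl
    have hconst : ∀ p ∈ W ∩ PU k i, f p = c := by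
      intro p hp
      have hcl : commonLen k p = w.length := commonLen_PU k hp.2
      simp only [hf, hcl, hc]
    have hUval : ηA (PU k i) = c * (μA.prod μA) (PU k i) := by
      rw [hPU]
      exact eta_prod_cyl k hk μA hμA ηA hηA' (s := []) (t := []) hia hib hiab
    have hfinU : ηA (PU k i) ≠ ⊤ := by
      rw [hUval]
      exact ENNReal.mul_ne_top
        (ENNReal.mul_ne_top hKt (ENNReal.zpow_lt_top hR0 hRt _).ne)
        (measure_ne_top _ _)
    have hext : ηA (W ∩ PU k i) = c * (μA.prod μA) (W ∩ PU k i) := by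
      set m1 := ηA.restrict (PU k i) with hm1
      set m2 := c • ((μA.prod μA).restrict (PU k i)) with hm2
      haveI : IsFiniteMeasure m1 := ⟨by
        rw [hm1, Measure.restrict_apply_univ]
        exact lt_top_iff_ne_top.mpr hfinU⟩
      have hgen : ∀ S ∈ Set.image2 (· ×ˢ ·)
          {S : Set (Boundary k) | ∃ v : F k, S = Cyl k v}
          {S : Set (Boundary k) | ∃ v : F k, S = Cyl k v}, m1 S = m2 S := by
        rintro S ⟨s1, ⟨v1, rfl⟩, t1, ⟨v2, rfl⟩, rfl⟩
        have hSm : MeasurableSet ((Cyl k v1) ×ˢ (Cyl k v2)) :=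
          (measurableSet_cyl k v1).prod (measurableSet_cyl k v2)
        rw [hm1, hm2, Measure.restrict_apply hSm, Measure.smul_apply,
          Measure.restrict_apply hSm, smul_eq_mul, hPU, Set.prod_inter_prod,
          Set.inter_comm (Cyl k v1) _, Set.inter_comm (Cyl k v2) _]
        rcases cyl_inter_extension k hia v1 with h1 | ⟨s, hs, h1⟩
        · rw [h1, Set.empty_prod, measure_empty, measure_empty, mul_zero]
        · rcases cyl_inter_extension k hib v2 with h2 | ⟨t, ht, h2⟩
          · rw [h2, Set.prod_empty, measure_empty, measure_empty, mul_zero]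
          · rw [h1, h2]
            exact eta_prod_cyl k hk μA hμA ηA hηA' hs ht hiab
      have huniv : m1 Set.univ = m2 Set.univ := by
        rw [hm1, hm2, Measure.restrict_apply_univ, Measure.smul_apply,
          Measure.restrict_apply_univ, smul_eq_mul, hUval]
      have hm12 : m1 = m2 :=
        ext_of_generate_finite _ (prod_msp_eq k) (pi_system_cylProd k) hgen huniv
      have hA : MeasurableSet (W ∩ PU k i) := hmeas i
      have e1 : m1 (W ∩ PU k i) = ηA (W ∩ PU k i) := by
        rw [hm1, Measure.restrict_apply hA,
          Set.inter_eq_self_of_subset_left (Set.inter_subset_right)]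
      have e2 : m2 (W ∩ PU k i) = c * (μA.prod μA) (W ∩ PU k i) := by
        rw [hm2, Measure.smul_apply, Measure.restrict_apply hA, smul_eq_mul,
          Set.inter_eq_self_of_subset_left (Set.inter_subset_right)]
      rw [← e1, ← e2, hm12]
    calc ηA (W ∩ PU k i) = c * (μA.prod μA) (W ∩ PU k i) := hext
      _ = ∫⁻ _ in W ∩ PU k i, c ∂(μA.prod μA) := (setLIntegral_const _ _).symm
      _ = ∫⁻ p in W ∩ PU k i, f p ∂(μA.prod μA) :=
        (setLIntegral_congr_fun (hmeas i) hconst).symm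
  calc ηA W = ηA (⋃ i : PIdx k, W ∩ PU k i) := by rw [← hWU]
    _ = ∑' i : PIdx k, ηA (W ∩ PU k i) := measure_iUnion hdisj hmeas
    _ = ∑' i : PIdx k, ∫⁻ p in W ∩ PU k i, f p ∂(μA.prod μA) := tsum_congr key
    _ = ∫⁻ p in ⋃ i : PIdx k, W ∩ PU k i, f p ∂(μA.prod μA) :=
      (lintegral_iUnion hmeas hdisj f).symm
    _ = ∫⁻ p in W, f p ∂(μA.prod μA) := by rw [← hWU]

end

end FGC
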